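/- The projective dual of a PGA point is its homogeneous vector representation: for every x ∈ E = span{e₁, e₂, e₃}, the PGA point P(x) := I_E + ι(x)^{*_E} ι(e₀) satisfies P(x)^{*_P} = ι(e₀ + x). -/

import Mathlib

open CliffordAlgebra

section AuxGeneral
variable {A : Type*} [Ring A]
lemma anti' {x y : A} (h : y * x = -(x * y)) (c : A) : y * (x * c) = -(x * (y * c)) := by
  rw [← mul_assoc, h, neg_mul, mul_assoc]
lemma sqone' {x : A} (h : x * x = 1) (c : A) : x * (x * c) = c := by
  rw [← mul_assoc, h, one_mul]
lemma sqzero' {x : A} (h : x * x = 0) (c : A) : x * (x * c) = 0 := by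
  rw [← mul_assoc, h, zero_mul]
end AuxGeneral

lemma anti2' {A : Type*} [Ring A] [Module ℝ A] [SMulCommClass ℝ A A] [IsScalarTower ℝ A A]
    {x y : A} (h : y * x = -(x * y) - (2:ℝ) • 1) (c : A) :
    y * (x * c) = -(x * (y * c)) - (2:ℝ) • c := by
  rw [← mul_assoc, h, sub_mul, neg_mul, mul_assoc, smul_mul_assoc, one_mul]

/-- The matrix of the CGA inner product on `V = ℝ⁵`; indices `0, 1, 2, 3, 4`
correspond to the basis `e₀, e₁, e₂, e₃, e∞`. -/
def Bmat : Matrix (Fin 5) (Fin 5) ℝ :=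
  !![0, 0, 0, 0, -1;
     0, 1, 0, 0, 0;
     0, 0, 1, 0, 0;
     0, 0, 0, 1, 0;
     -1, 0, 0, 0, 0]

/-- The CGA quadratic form
`Q(a e₀ + x₁e₁ + x₂e₂ + x₃e₃ + b e∞) = x₁² + x₂² + x₃² − 2ab`. -/
noncomputable def Q : QuadraticForm ℝ (Fin 5 → ℝ) := Bmat.toQuadraticMap'

/-- The basis vectors of `V = ℝ⁵`: `e 0 = e₀`, `e 1, e 2, e 3` Euclidean, `e 4 = e∞`. -/
def e (i : Fin 5) : Fin 5 → ℝ := Pi.single i 1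

/-- The linear map `♯ : V → V` fixing `e₁, e₂, e₃` and sending `e₀ ↦ -e∞`, `e∞ ↦ -e₀`. -/
def sharpV : (Fin 5 → ℝ) →ₗ[ℝ] (Fin 5 → ℝ) where
  toFun v i := if i = 0 then -(v 4) else if i = 4 then -(v 0) else v i
  map_add' u v := by
    funext i
    by_cases h : i = 0 <;> by_cases h' : i = 4 <;> simp [h, h'] <;> ring
  map_smul' c v := by
    funext i
    by_cases h : i = 0 <;> by_cases h' : i = 4 <;> simp [h, h'] <;> ring


lemma Q_apply (v : Fin 5 → ℝ) : Q v = v 1 ^ 2 + v 2 ^ 2 + v 3 ^ 2 - 2 * v 0 * v 4 := by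
  simp [Q, Matrix.toQuadraticMap', Matrix.toQuadraticForm', LinearMap.BilinMap.toQuadraticMap_apply,
    Matrix.toLinearMap₂'_apply, Bmat, Fin.sum_univ_five, Matrix.vecHead, Matrix.vecTail]
  ring

lemma polar_eval (u v : Fin 5 → ℝ) : QuadraticMap.polar Q u v =
    2 * (u 1 * v 1 + u 2 * v 2 + u 3 * v 3) - 2 * (u 0 * v 4 + u 4 * v 0) := by
  simp [QuadraticMap.polar, Q_apply]; ring

lemma sq_e (i : Fin 5) : ι Q (e i) * ι Q (e i) = algebraMap ℝ _ (Q (e i)) := ι_sq_scalar _ _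

lemma sq0 : ι Q (e 0) * ι Q (e 0) = 0 := by
  rw [sq_e, Q_apply]; simp [e, Pi.single_apply]
lemma sq4 : ι Q (e 4) * ι Q (e 4) = 0 := by
  rw [sq_e, Q_apply]; simp [e, Pi.single_apply]
lemma sq1 : ι Q (e 1) * ι Q (e 1) = 1 := by
  rw [sq_e, Q_apply]; simp [e, Pi.single_apply]
lemma sq2 : ι Q (e 2) * ι Q (e 2) = 1 := by
  rw [sq_e, Q_apply]; simp [e, Pi.single_apply]
lemma sq3 : ι Q (e 3) * ι Q (e 3) = 1 := by
  rw [sq_e, Q_apply]; simp [e, Pi.single_apply]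

lemma anti_e {i j : Fin 5} (h : QuadraticMap.polar Q (e j) (e i) = 0) :
    ι Q (e j) * ι Q (e i) = -(ι Q (e i) * ι Q (e j)) := by
  rw [ι_mul_ι_comm, h, map_zero, zero_sub]

lemma a10 : ι Q (e 1) * ι Q (e 0) = -(ι Q (e 0) * ι Q (e 1)) := by
  apply anti_e; rw [polar_eval]; simp [e, Pi.single_apply]
lemma a20 : ι Q (e 2) * ι Q (e 0) = -(ι Q (e 0) * ι Q (e 2)) := by
  apply anti_e; rw [polar_eval]; simp [e, Pi.single_apply]
lemma a30 : ι Q (e 3) * ι Q (e 0) = -(ι Q (e 0) * ι Q (e 3)) := by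
  apply anti_e; rw [polar_eval]; simp [e, Pi.single_apply]
lemma a21 : ι Q (e 2) * ι Q (e 1) = -(ι Q (e 1) * ι Q (e 2)) := by
  apply anti_e; rw [polar_eval]; simp [e, Pi.single_apply]
lemma a31 : ι Q (e 3) * ι Q (e 1) = -(ι Q (e 1) * ι Q (e 3)) := by
  apply anti_e; rw [polar_eval]; simp [e, Pi.single_apply]
lemma a32 : ι Q (e 3) * ι Q (e 2) = -(ι Q (e 2) * ι Q (e 3)) := by
  apply anti_e; rw [polar_eval]; simp [e, Pi.single_apply]
lemma a41 : ι Q (e 4) * ι Q (e 1) = -(ι Q (e 1) * ι Q (e 4)) := by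
  apply anti_e; rw [polar_eval]; simp [e, Pi.single_apply]
lemma a42 : ι Q (e 4) * ι Q (e 2) = -(ι Q (e 2) * ι Q (e 4)) := by
  apply anti_e; rw [polar_eval]; simp [e, Pi.single_apply]
lemma a43 : ι Q (e 4) * ι Q (e 3) = -(ι Q (e 3) * ι Q (e 4)) := by
  apply anti_e; rw [polar_eval]; simp [e, Pi.single_apply]
lemma a40 : ι Q (e 4) * ι Q (e 0) = -(ι Q (e 0) * ι Q (e 4)) - (2:ℝ) • 1 := by
  rw [ι_mul_ι_comm, polar_eval]
  simp [e, Pi.single_apply, Algebra.algebraMap_eq_smul_one]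
  abel

lemma sharp0 : sharpV (e 0) = -(e 4) := by
  funext i; fin_cases i <;> simp [sharpV, e, Pi.single_apply]
lemma sharp4 : sharpV (e 4) = -(e 0) := by
  funext i; fin_cases i <;> simp [sharpV, e, Pi.single_apply]
lemma sharp1 : sharpV (e 1) = e 1 := by
  funext i; fin_cases i <;> simp [sharpV, e, Pi.single_apply]
lemma sharp2 : sharpV (e 2) = e 2 := by
  funext i; fin_cases i <;> simp [sharpV, e, Pi.single_apply]
lemma sharp3 : sharpV (e 3) = e 3 := by
  funext i; fin_cases i <;> simp [sharpV, e, Pi.single_apply]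

/-- Outer (wedge) product of a multivector with a vector:
`A ∧ v := ½ (A ι(v) + ι(v) α(A))`, where `α` is the grade involution. -/
noncomputable def wedgeVec (A : CliffordAlgebra Q) (v : Fin 5 → ℝ) : CliffordAlgebra Q :=
  (1 / 2 : ℝ) • (A * ι Q v + ι Q v * involute A)

/-- The conformal pseudoscalar `I_c = (((e₀ ∧ e₁) ∧ e₂) ∧ e₃) ∧ e∞`. -/
noncomputable def Ic : CliffordAlgebra Q :=
  wedgeVec (wedgeVec (wedgeVec (wedgeVec (ι Q (e 0)) (e 1)) (e 2)) (e 3)) (e 4)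

/-- The Euclidean pseudoscalar `I_E = ι(e₁) ι(e₂) ι(e₃)`. -/
noncomputable def IE : CliffordAlgebra Q := ι Q (e 1) * ι Q (e 2) * ι Q (e 3)

/-- The Euclidean dual `X^{*_E} := X I_E⁻¹ = -X I_E`. -/
noncomputable def dualE (X : CliffordAlgebra Q) : CliffordAlgebra Q := -(X * IE)

/-- The PGA representation of the Euclidean point `x`: `P(x) = I_E + x^{*_E} e₀`. -/
noncomputable def Ppt (x : Fin 5 → ℝ) : CliffordAlgebra Q :=
  IE + dualE (ι Q x) * ι Q (e 0)

/-- The projective (PGA) dual `A^{*_P} := ♯((A ∧ e∞) I_c⁻¹)`, with `I_c⁻¹ = -I_c`,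
expressed relative to a realization `F` of the involution `♯` on the Clifford algebra
(i.e. `F` is the algebra endomorphism induced by the isometry `♯ : V → V`,
characterized by `F (ι v) = ι (♯ v)`). -/
noncomputable def dualP (F : CliffordAlgebra Q →ₐ[ℝ] CliffordAlgebra Q)
    (A : CliffordAlgebra Q) : CliffordAlgebra Q :=
  F (wedgeVec A (e 4) * (-Ic))

/-- The projective dual of a PGA point is its homogeneous vector
representation: for every `x ∈ span{e₁,e₂,e₃}`, `P(x)^{*_P} = ι(e₀ + x)`. -/
theorem dualP_point (F : CliffordAlgebra Q →ₐ[ℝ] CliffordAlgebra Q)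
    (hF : ∀ v : Fin 5 → ℝ, F (ι Q v) = ι Q (sharpV v)) :
    ∀ x : Fin 5 → ℝ, x 0 = 0 → x 4 = 0 →
      dualP F (Ppt x) = ι Q (e 0 + x) := by
  intro x h0 h4
  have hx : x = x 1 • e 1 + x 2 • e 2 + x 3 • e 3 := by
    funext i; fin_cases i <;> simp [e, Pi.single_apply, h0, h4]
  have hιx : ι Q x = x 1 • ι Q (e 1) + x 2 • ι Q (e 2) + x 3 • ι Q (e 3) := by
    conv_lhs => rw [hx]
    simp
  simp only [dualP, Ppt, dualE, Ic, IE, wedgeVec, hιx]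
  simp only [map_mul, map_add, map_smul, map_neg, map_one, involute_ι, hF,
    sharp0, sharp1, sharp2, sharp3, sharp4]
  simp only [map_neg, map_add, map_smul, hιx]
  simp only [mul_assoc, mul_add, add_mul, mul_neg, neg_mul, neg_add, neg_neg,
    mul_smul_comm, smul_mul_assoc, smul_add, smul_neg, smul_smul,
    one_mul, mul_one, mul_zero, zero_mul, add_zero, zero_add, smul_zero, sub_eq_add_neg,
    sq0, sq1, sq2, sq3, sq4, a10, a20, a30, a21, a31, a32, a41, a42, a43, a40,
    anti' a10, anti' a20, anti' a30, anti' a21, anti' a31, anti' a32,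
    anti' a41, anti' a42, anti' a43, anti2' a40,
    sqone' sq1, sqone' sq2, sqone' sq3, sqzero' sq0, sqzero' sq4]
  module
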